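/- For every nonnegative integer d, the polynomial p_d(z) = P_{d,d}(z) satisfies the second-order differential identity z(4z+1) p_d''(z) = 2((2d-3)z + d) p_d'(z) - d(d-1) p_d(z) as polynomials in z over the rationals. -/

import Mathlib

open Polynomial

/-- The multinomial coefficient `(a+b+c)! / (a! b! c!)`. -/
def mult3 (a b c : ℕ) : ℕ := (a + b + c).factorial / (a.factorial * b.factorial * c.factorial)

/-- `P k n = ∑_{b=0}^{⌊n/2⌋} multinomial(k+n-b; k, b, n-2b) z^b ∈ ℚ[z]`. -/
noncomputable def Ppoly (k n : ℕ) : Polynomial ℚ :=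
  ∑ b ∈ Finset.range (n / 2 + 1), C (mult3 k b (n - 2 * b) : ℚ) * X ^ b

lemma mult3_mul (a b c : ℕ) :
    a.factorial * b.factorial * c.factorial * mult3 a b c = (a + b + c).factorial := by
  have h1 : (a + b + c).choose a * a.factorial * (b + c).factorial = (a + b + c).factorial := by
    have h := Nat.choose_mul_factorial_mul_factorial (Nat.le_add_right a (b + c))
    simpa [add_assoc] using h
  have h2 : (b + c).choose b * b.factorial * c.factorial = (b + c).factorial := by
    have h := Nat.choose_mul_factorial_mul_factorial (Nat.le_add_right b c)
    simpa using h
  have key : (a + b + c).factorial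
      = a.factorial * b.factorial * c.factorial * ((a + b + c).choose a * (b + c).choose b) := by
    rw [← h1, ← h2]; ring
  have hm : mult3 a b c = (a + b + c).choose a * (b + c).choose b := by
    rw [mult3, key, Nat.mul_div_cancel_left]
    exact Nat.mul_pos (Nat.mul_pos (Nat.factorial_pos a) (Nat.factorial_pos b))
      (Nat.factorial_pos c)
  rw [hm, ← key]

lemma mult3_cast (a b c : ℕ) :
    (mult3 a b c : ℚ) = (a + b + c).factorial / (a.factorial * b.factorial * c.factorial) := by
  rw [eq_div_iff]
  · rw [mul_comm]
    exact_mod_cast congrArg (Nat.cast : ℕ → ℚ) (mult3_mul a b c)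
  · have := Nat.factorial_pos a
    have := Nat.factorial_pos b
    have := Nat.factorial_pos c
    positivity

/-- Coefficients of `Ppoly d d`. -/
noncomputable def cc (d b : ℕ) : ℚ := if b ≤ d / 2 then (mult3 d b (d - 2 * b) : ℚ) else 0

lemma coeff_Ppoly (d b : ℕ) : (Ppoly d d).coeff b = cc d b := by
  rw [Ppoly, finset_sum_coeff]
  simp only [coeff_C_mul, coeff_X_pow, mul_ite, mul_one, mul_zero]
  rw [Finset.sum_ite_eq (Finset.range (d / 2 + 1)) b (fun j => (mult3 d j (d - 2 * j) : ℚ))]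
  simp [cc, Finset.mem_range, Nat.lt_succ_iff]

lemma key (d n : ℕ) :
    4 * (n : ℚ) * ((n : ℚ) - 1) * cc d n + (n : ℚ) * ((n : ℚ) + 1) * cc d (n + 1)
      = 2 * (2 * (d : ℚ) - 3) * (n : ℚ) * cc d n + 2 * (d : ℚ) * ((n : ℚ) + 1) * cc d (n + 1)
        - (d : ℚ) * ((d : ℚ) - 1) * cc d n := by
  rcases le_or_gt (n + 1) (d / 2) with h1 | h1
  · obtain ⟨m, rfl⟩ : ∃ m, d = m + 2 * n + 2 := ⟨d - (2 * n + 2), by omega⟩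
    have e1 : cc (m + 2 * n + 2) n = (mult3 (m + 2 * n + 2) n (m + 2) : ℚ) := by
      rw [cc, if_pos (by omega)]
      rw [show m + 2 * n + 2 - 2 * n = m + 2 by omega]
    have e2 : cc (m + 2 * n + 2) (n + 1) = (mult3 (m + 2 * n + 2) (n + 1) m : ℚ) := by
      rw [cc, if_pos (by omega)]
      rw [show m + 2 * n + 2 - 2 * (n + 1) = m by omega]
    rw [e1, e2, mult3_cast, mult3_cast]
    rw [show m + 2 * n + 2 + n + (m + 2) = 2 * m + 3 * n + 4 by ring]
    rw [show m + 2 * n + 2 + (n + 1) + m = 2 * m + 3 * n + 3 by ring]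
    rw [show (2 * m + 3 * n + 4).factorial
        = (2 * m + 3 * n + 4) * (2 * m + 3 * n + 3).factorial by
      rw [show 2 * m + 3 * n + 4 = (2 * m + 3 * n + 3) + 1 by ring, Nat.factorial_succ]]
    rw [show (n + 1).factorial = (n + 1) * n.factorial from Nat.factorial_succ n]
    rw [show (m + 2).factorial = (m + 2) * ((m + 1) * m.factorial) by
      rw [show m + 2 = (m + 1) + 1 by ring, Nat.factorial_succ, Nat.factorial_succ]]
    have hS : ((2 * m + 3 * n + 3).factorial : ℚ) ≠ 0 := by
      exact_mod_cast (Nat.factorial_ne_zero _)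
    have hd : (((m + 2 * n + 2).factorial : ℕ) : ℚ) ≠ 0 := by
      exact_mod_cast (Nat.factorial_ne_zero _)
    have hn : ((n.factorial : ℕ) : ℚ) ≠ 0 := by
      exact_mod_cast (Nat.factorial_ne_zero _)
    have hm0 : ((m.factorial : ℕ) : ℚ) ≠ 0 := by
      exact_mod_cast (Nat.factorial_ne_zero _)
    push_cast
    field_simp
    ring
  · have hc1 : cc d (n + 1) = 0 := by rw [cc, if_neg (by omega)]
    rcases le_or_gt n (d / 2) with h2 | h2
    · have hd : d = 2 * n ∨ d = 2 * n + 1 := by omega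
      rw [hc1]
      rcases hd with rfl | rfl <;> push_cast <;> ring
    · have hc0 : cc d n = 0 := by rw [cc, if_neg (by omega)]
      rw [hc0, hc1]; ring

theorem stmt3 (d : ℕ) :
    X * (C 4 * X + 1) * derivative (derivative (Ppoly d d)) =
      C 2 * (C (2 * (d : ℚ) - 3) * X + C (d : ℚ)) * derivative (Ppoly d d)
        - C ((d : ℚ) * ((d : ℚ) - 1)) * Ppoly d d := by
  have hL : X * (C 4 * X + 1) * derivative (derivative (Ppoly d d))
      = C 4 * (derivative (derivative (Ppoly d d)) * X ^ 2) + derivative (derivative (Ppoly d d)) * X ^ 1 := by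
    ring
  have hR : C 2 * (C (2 * (d : ℚ) - 3) * X + C (d : ℚ)) * derivative (Ppoly d d)
        - C ((d : ℚ) * ((d : ℚ) - 1)) * Ppoly d d
      = C 2 * (C (2 * (d : ℚ) - 3) * (derivative (Ppoly d d) * X ^ 1))
        + C 2 * (C (d : ℚ) * derivative (Ppoly d d)) - C ((d : ℚ) * ((d : ℚ) - 1)) * Ppoly d d := by
    ring
  rw [hL, hR]
  ext n
  simp only [coeff_add, coeff_sub, coeff_C_mul, coeff_mul_X_pow', coeff_derivative,
    coeff_Ppoly]
  rcases n with _ | _ | n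
  · norm_num
    have h := key d 0
    push_cast at h ⊢
    linear_combination h
  · norm_num
    have h := key d 1
    push_cast at h ⊢
    linear_combination h
  · have c2 : (2 : ℕ) ≤ n + 2 := by omega
    have c1 : (1 : ℕ) ≤ n + 2 := by omega
    rw [if_pos c2, if_pos c1, if_pos c1]
    rw [show n + 2 - 2 = n by omega, show n + 2 - 1 = n + 1 by omega]
    have h := key d (n + 2)
    push_cast at h ⊢
    linear_combination h
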